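/- arXiv:1610.08231 — 6 statements merged into one kernel-verified Lean document; each statement's English description precedes it below -/
import Mathlib

section
/- Let M be a triangulated category that is a module over a tensor triangulated category (K,⊗,1), and let c : SMod(M) → SMod(M) be an operator that is extensive, order-preserving and of finite type. Then SMod^c(M) is a spectral space, having the collection {U(m) ∩ SMod^c(M)}_{m ∈ M} as a basis of quasi-compact open subspaces. -/
open CategoryTheory CategoryTheory.Limits CategoryTheory.Pretriangulated
open CategoryTheory.MonoidalCategory ZeroObject

universe v u v' u'

/-- The data of the action of a tensor triangulated category `(K,⊗,1)` on a triangulated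
category `M`, recorded on objects together with the unit and shift coherences that we use. -/
structure TTModuleStr (K : Type u) [Category.{v} K] [MonoidalCategory K] [HasShift K ℤ]
    (M : Type u') [Category.{v'} M] [HasShift M ℤ] where
  act : K → M → M
  act_unit : ∀ m : M, Nonempty (act (𝟙_ K) m ≅ m)
  act_unit_shift : ∀ m : M, Nonempty (act ((𝟙_ K)⟦(1 : ℤ)⟧) m ≅ m⟦(1 : ℤ)⟧)
  act_unit_shift_neg : ∀ m : M, Nonempty (act ((𝟙_ K)⟦(-1 : ℤ)⟧) m ≅ m⟦(-1 : ℤ)⟧)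

variable {K : Type u} [Category.{v} K] [MonoidalCategory K] [HasZeroObject K] [Preadditive K]
  [HasShift K ℤ] [∀ n : ℤ, (shiftFunctor K n).Additive] [Pretriangulated K]
variable {M : Type u'} [Category.{v'} M] [HasZeroObject M] [Preadditive M] [HasShift M ℤ]
  [∀ n : ℤ, (shiftFunctor M n).Additive] [Pretriangulated M] [HasBinaryBiproducts M]

/-- A thick `K`-submodule of `M`. -/
structure ThickSubmodule (A : TTModuleStr K M) where
  carrier : Set M
  zero_mem : (0 : M) ∈ carrier
  act_mem : ∀ (a : K) (m : M), m ∈ carrier → A.act a m ∈ carrier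
  biprod_mem_iff : ∀ m m' : M, (m ⊞ m') ∈ carrier ↔ (m ∈ carrier ∧ m' ∈ carrier)
  mem₃_of_dist : ∀ T : Triangle M, T ∈ (distTriang M) →
    T.obj₁ ∈ carrier → T.obj₂ ∈ carrier → T.obj₃ ∈ carrier
  mem₁_of_dist : ∀ T : Triangle M, T ∈ (distTriang M) →
    T.obj₂ ∈ carrier → T.obj₃ ∈ carrier → T.obj₁ ∈ carrier
  mem₂_of_dist : ∀ T : Triangle M, T ∈ (distTriang M) →
    T.obj₁ ∈ carrier → T.obj₃ ∈ carrier → T.obj₂ ∈ carrier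

variable (A : TTModuleStr K M)

instance : SetLike (ThickSubmodule A) M where
  coe N := N.carrier
  coe_injective := by intro N N' h; cases N; cases N'; congr

/-- `U(m) = { N ∈ SMod(M) | m ∈ N }`. -/
def U (m : M) : Set (ThickSubmodule A) := {N : ThickSubmodule A | m ∈ N.carrier}

/-- The topology on `SMod(M)` generated by the subbasis `{U(m)}_{m ∈ M}`. -/
instance : TopologicalSpace (ThickSubmodule A) :=
  TopologicalSpace.generateFrom (Set.range (U A))

/-- The thick `K`-submodule of `M` generated by a set `X` of objects of `M`. -/
def genSub (X : Set M) : ThickSubmodule A where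
  carrier := ⋂ (N : ThickSubmodule A) (_ : X ⊆ N.carrier), N.carrier
  zero_mem := by
    simp only [Set.mem_iInter]; intro N _; exact N.zero_mem
  act_mem := by
    intro a m hm
    simp only [Set.mem_iInter] at hm ⊢
    intro N hN
    exact N.act_mem a m (hm N hN)
  biprod_mem_iff := by
    intro m m'
    simp only [Set.mem_iInter]
    constructor
    · intro h
      exact ⟨fun N hN => ((N.biprod_mem_iff m m').1 (h N hN)).1,
        fun N hN => ((N.biprod_mem_iff m m').1 (h N hN)).2⟩
    · rintro ⟨h1, h2⟩ N hN
      exact (N.biprod_mem_iff m m').2 ⟨h1 N hN, h2 N hN⟩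
  mem₃_of_dist := by
    intro T hT h1 h2
    simp only [Set.mem_iInter] at h1 h2 ⊢
    intro N hN
    exact N.mem₃_of_dist T hT (h1 N hN) (h2 N hN)
  mem₁_of_dist := by
    intro T hT h1 h2
    simp only [Set.mem_iInter] at h1 h2 ⊢
    intro N hN
    exact N.mem₁_of_dist T hT (h1 N hN) (h2 N hN)
  mem₂_of_dist := by
    intro T hT h1 h2
    simp only [Set.mem_iInter] at h1 h2 ⊢
    intro N hN
    exact N.mem₂_of_dist T hT (h1 N hN) (h2 N hN)

/-- The largest thick `K`-submodule: all of `M`. -/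
def topSub : ThickSubmodule A where
  carrier := Set.univ
  zero_mem := trivial
  act_mem := fun _ _ _ => trivial
  biprod_mem_iff := fun _ _ => by simp
  mem₃_of_dist := fun _ _ _ _ => trivial
  mem₁_of_dist := fun _ _ _ _ => trivial
  mem₂_of_dist := fun _ _ _ _ => trivial

/-- An operator on `SMod(M)` is extensive if `N ⊆ c(N)` for all `N`. -/
def Extensive (c : ThickSubmodule A → ThickSubmodule A) : Prop :=
  ∀ N : ThickSubmodule A, N.carrier ⊆ (c N).carrier

/-- An operator on `SMod(M)` is order-preserving if `N ⊆ N'` implies `c(N) ⊆ c(N')`. -/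
def OrderPreserving (c : ThickSubmodule A → ThickSubmodule A) : Prop :=
  ∀ N N' : ThickSubmodule A, N.carrier ⊆ N'.carrier → (c N).carrier ⊆ (c N').carrier

/-- An operator on `SMod(M)` is idempotent if `c(c(N)) = c(N)` for all `N`. -/
def Idempotent (c : ThickSubmodule A → ThickSubmodule A) : Prop :=
  ∀ N : ThickSubmodule A, c (c N) = c N

/-- An operator on `SMod(M)` is of finite type if `c(N) = ⋃_{n ∈ N} c(K(n))`. -/
def FiniteType (c : ThickSubmodule A → ThickSubmodule A) : Prop :=
  ∀ N : ThickSubmodule A,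
    (c N).carrier = ⋃ n ∈ N.carrier, (c (genSub A {n})).carrier

/-- A topological space is spectral if it is quasi-compact, `T0`, sober, and its
quasi-compact open subsets form a basis that is closed under finite intersections. -/
def IsSpectralSpace (X : Type*) [TopologicalSpace X] : Prop :=
  CompactSpace X ∧ T0Space X ∧ QuasiSober X ∧
    TopologicalSpace.IsTopologicalBasis {s : Set X | IsOpen s ∧ IsCompact s} ∧
    ∀ s t : Set X, IsOpen s → IsCompact s → IsOpen t → IsCompact t → IsCompact (s ∩ t)



section Aux

lemma ThickSubmodule.ext' {N N' : ThickSubmodule A} (h : N.carrier = N'.carrier) : N = N' := by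
  cases N; cases N'; congr

lemma mem_U_iff {m : M} {N : ThickSubmodule A} : N ∈ U A m ↔ m ∈ N.carrier := Iff.rfl

lemma U_zero : U A 0 = Set.univ := by
  ext N
  simp only [Set.mem_univ, iff_true]
  exact N.zero_mem

lemma U_biprod (m m' : M) : U A (m ⊞ m') = U A m ∩ U A m' := by
  ext N
  exact N.biprod_mem_iff m m'

lemma isOpen_U (m : M) : IsOpen (U A m) :=
  TopologicalSpace.GenerateOpen.basic _ ⟨m, rfl⟩

lemma exists_basic_subset {v : Set (ThickSubmodule A)}
    (hv : TopologicalSpace.GenerateOpen (Set.range (U A)) v) :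
    ∀ N ∈ v, ∃ m : M, N ∈ U A m ∧ U A m ⊆ v := by
  induction hv with
  | basic s hs =>
    obtain ⟨m, rfl⟩ := hs
    exact fun N hN => ⟨m, hN, subset_rfl⟩
  | univ => exact fun N _ => ⟨0, N.zero_mem, fun _ _ => trivial⟩
  | inter s t _ _ ihs iht =>
    rintro N ⟨hNs, hNt⟩
    obtain ⟨m₁, h₁, hs₁⟩ := ihs N hNs
    obtain ⟨m₂, h₂, hs₂⟩ := iht N hNt
    refine ⟨m₁ ⊞ m₂, ?_, ?_⟩
    · rw [U_biprod]; exact ⟨h₁, h₂⟩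
    · rw [U_biprod]; exact fun N' hN' => ⟨hs₁ hN'.1, hs₂ hN'.2⟩
  | sUnion S _ ih =>
    rintro N ⟨s, hs, hNs⟩
    obtain ⟨m, hm, hsub⟩ := ih s hs N hNs
    exact ⟨m, hm, hsub.trans (Set.subset_sUnion_of_mem hs)⟩

variable (P : ThickSubmodule A → Prop)

lemma isBasis_sub :
    TopologicalSpace.IsTopologicalBasis
      (Set.range fun m : M => (Subtype.val ⁻¹' U A m : Set {N : ThickSubmodule A // P N})) := by
  apply TopologicalSpace.isTopologicalBasis_of_isOpen_of_nhds
  · rintro _ ⟨m, rfl⟩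
    exact (isOpen_U A m).preimage continuous_subtype_val
  · intro x u hxu hu
    obtain ⟨v, hv, rfl⟩ := isOpen_induced_iff.mp hu
    obtain ⟨m, hm, hsub⟩ := exists_basic_subset A hv x.val hxu
    exact ⟨_, ⟨m, rfl⟩, hm, fun y hy => hsub hy⟩

lemma mem_closure_singleton_iff (x y : {N : ThickSubmodule A // P N}) :
    y ∈ closure ({x} : Set {N : ThickSubmodule A // P N}) ↔
      y.val.carrier ⊆ x.val.carrier := by
  rw [mem_closure_iff]
  constructor
  · intro h m hm
    obtain ⟨z, hz1, hz2⟩ :=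
      h _ ((isOpen_U A m).preimage continuous_subtype_val) hm
    rw [Set.mem_singleton_iff] at hz2
    subst hz2
    exact hz1
  · intro hsub o ho hyo
    obtain ⟨b, ⟨m, rfl⟩, hm, hbs⟩ := (isBasis_sub A P).exists_subset_of_mem_open hyo ho
    exact ⟨x, hbs (hsub hm), rfl⟩

/-- The intersection of a family of thick submodules. -/
def interSub (S : Set (ThickSubmodule A)) : ThickSubmodule A where
  carrier := ⋂ N ∈ S, N.carrier
  zero_mem := by
    simp only [Set.mem_iInter]; intro N _; exact N.zero_mem
  act_mem := by
    intro a m hm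
    simp only [Set.mem_iInter] at hm ⊢
    intro N hN
    exact N.act_mem a m (hm N hN)
  biprod_mem_iff := by
    intro m m'
    simp only [Set.mem_iInter]
    constructor
    · intro h
      exact ⟨fun N hN => ((N.biprod_mem_iff m m').1 (h N hN)).1,
        fun N hN => ((N.biprod_mem_iff m m').1 (h N hN)).2⟩
    · rintro ⟨h1, h2⟩ N hN
      exact (N.biprod_mem_iff m m').2 ⟨h1 N hN, h2 N hN⟩
  mem₃_of_dist := by
    intro T hT h1 h2
    simp only [Set.mem_iInter] at h1 h2 ⊢
    intro N hN
    exact N.mem₃_of_dist T hT (h1 N hN) (h2 N hN)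
  mem₁_of_dist := by
    intro T hT h1 h2
    simp only [Set.mem_iInter] at h1 h2 ⊢
    intro N hN
    exact N.mem₁_of_dist T hT (h1 N hN) (h2 N hN)
  mem₂_of_dist := by
    intro T hT h1 h2
    simp only [Set.mem_iInter] at h1 h2 ⊢
    intro N hN
    exact N.mem₂_of_dist T hT (h1 N hN) (h2 N hN)

lemma interSub_subset {S : Set (ThickSubmodule A)} {N : ThickSubmodule A} (hN : N ∈ S) :
    (interSub A S).carrier ⊆ N.carrier :=
  Set.biInter_subset_of_mem hN

lemma mem_interSub {S : Set (ThickSubmodule A)} {m : M} :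
    m ∈ (interSub A S).carrier ↔ ∀ N ∈ S, m ∈ N.carrier := by
  simp only [interSub, Set.mem_iInter]

variable {c : ThickSubmodule A → ThickSubmodule A}

lemma fixed_interSub (hext : Extensive A c) (hord : OrderPreserving A c)
    {S : Set (ThickSubmodule A)} (hS : ∀ N ∈ S, c N = N) :
    c (interSub A S) = interSub A S := by
  apply ThickSubmodule.ext'
  apply Set.Subset.antisymm
  · intro m hm
    rw [mem_interSub]
    intro N hN
    have h1 := hord _ _ (interSub_subset A hN) hm
    rwa [hS N hN] at h1
  · exact hext _

lemma subcover_basic (hext : Extensive A c) (hord : OrderPreserving A c)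
    (s : Set {N : ThickSubmodule A // c N = N}) (m₀ : M)
    (hs : s = Subtype.val ⁻¹' U A m₀)
    {ι : Type*} (f : ι → M)
    (hcov : s ⊆ ⋃ i, Subtype.val ⁻¹' U A (f i)) :
    ∃ t : Finset ι, s ⊆ ⋃ i ∈ t, Subtype.val ⁻¹' U A (f i) := by
  by_contra h
  push_neg at h
  have hch : ∀ t : Finset ι, ∃ N : {N : ThickSubmodule A // c N = N},
      m₀ ∈ N.val.carrier ∧ ∀ i ∈ t, f i ∉ N.val.carrier := by
    intro t
    obtain ⟨N, hN1, hN2⟩ := Set.not_subset.mp (h t)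
    refine ⟨N, by rwa [hs] at hN1, ?_⟩
    intro i hi hfi
    exact hN2 (Set.mem_biUnion hi hfi)
  choose g hg1 hg2 using hch
  set S : Set (ThickSubmodule A) := Set.range (fun t => (g t).val) with hSdef
  have hfix : c (interSub A S) = interSub A S := by
    apply fixed_interSub A hext hord
    rintro N ⟨t, rfl⟩
    exact (g t).prop
  have hmem : (⟨interSub A S, hfix⟩ : {N : ThickSubmodule A // c N = N}) ∈ s := by
    rw [hs]
    show m₀ ∈ (interSub A S).carrier
    rw [mem_interSub]
    rintro N ⟨t, rfl⟩
    exact hg1 t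
  obtain ⟨i, hi⟩ := Set.mem_iUnion.mp (hcov hmem)
  have hsub : (interSub A S).carrier ⊆ (g {i}).val.carrier :=
    interSub_subset A ⟨{i}, rfl⟩
  exact hg2 {i} i (Finset.mem_singleton_self i) (hsub hi)

lemma compact_basic (hext : Extensive A c) (hord : OrderPreserving A c) (m₀ : M) :
    IsCompact (Subtype.val ⁻¹' U A m₀ : Set {N : ThickSubmodule A // c N = N}) := by
  apply isCompact_of_finite_subcover
  intro ι V hV hcov
  -- refine the cover through the basis
  set s := (Subtype.val ⁻¹' U A m₀ : Set {N : ThickSubmodule A // c N = N}) with hsdef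
  have hpick : ∀ x : s, ∃ (m : M) (i : ι),
      x.val ∈ (Subtype.val ⁻¹' U A m : Set {N : ThickSubmodule A // c N = N}) ∧
      (Subtype.val ⁻¹' U A m : Set {N : ThickSubmodule A // c N = N}) ⊆ V i := by
    intro x
    obtain ⟨i, hi⟩ := Set.mem_iUnion.mp (hcov x.prop)
    obtain ⟨b, ⟨m, rfl⟩, hm, hbs⟩ :=
      (isBasis_sub A (fun N => c N = N)).exists_subset_of_mem_open hi (hV i)
    exact ⟨m, i, hm, hbs⟩
  choose mf idx hmem hsubV using hpick
  have hcov' : s ⊆ ⋃ x : s, Subtype.val ⁻¹' U A (mf x) := by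
    intro y hy
    exact Set.mem_iUnion.mpr ⟨⟨y, hy⟩, hmem ⟨y, hy⟩⟩
  obtain ⟨t, ht⟩ := subcover_basic A hext hord s m₀ rfl mf hcov'
  classical
  refine ⟨t.image idx, ?_⟩
  intro y hy
  obtain ⟨x, hx, hyx⟩ := Set.mem_iUnion₂.mp (ht hy)
  exact Set.mem_biUnion (Finset.mem_image_of_mem idx hx) (hsubV x hyx)

lemma open_compact_eq_finite_union
    {s : Set {N : ThickSubmodule A // c N = N}} (ho : IsOpen s) (hc : IsCompact s) :
    ∃ (ι : Type u') (t : Finset ι) (f : ι → M),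
      s = ⋃ i ∈ t, (Subtype.val ⁻¹' U A (f i) : Set {N : ThickSubmodule A // c N = N}) := by
  have hpick : ∀ x : s, ∃ m : M,
      x.val ∈ (Subtype.val ⁻¹' U A m : Set {N : ThickSubmodule A // c N = N}) ∧
      (Subtype.val ⁻¹' U A m : Set {N : ThickSubmodule A // c N = N}) ⊆ s := by
    intro x
    obtain ⟨b, ⟨m, rfl⟩, hm, hbs⟩ :=
      (isBasis_sub A (fun N => c N = N)).exists_subset_of_mem_open x.prop ho
    exact ⟨m, hm, hbs⟩
  choose mf hmem hsubs using hpick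
  have hcov : s ⊆ ⋃ x : s, Subtype.val ⁻¹' U A (mf x) := by
    intro y hy
    exact Set.mem_iUnion.mpr ⟨⟨y, hy⟩, hmem ⟨y, hy⟩⟩
  obtain ⟨t, ht⟩ := hc.elim_finite_subcover _
    (fun x => (isOpen_U A (mf x)).preimage continuous_subtype_val) hcov
  refine ⟨s, t, mf, Set.Subset.antisymm ht ?_⟩
  intro y hy
  obtain ⟨x, _, hyx⟩ := Set.mem_iUnion₂.mp hy
  exact hsubs x hyx

end Aux

/-- Theorem 2.5: if `c` is extensive, order-preserving and of finite type, then
`SMod^c(M)` is a spectral space with `{U(m) ∩ SMod^c(M)}` a basis of quasi-compact opens. -/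
theorem statement2 (c : ThickSubmodule A → ThickSubmodule A)
    (hext : Extensive A c) (hord : OrderPreserving A c) (hft : FiniteType A c) :
    IsSpectralSpace {N : ThickSubmodule A // c N = N} ∧
    TopologicalSpace.IsTopologicalBasis
      (Set.range fun m : M =>
        (Subtype.val ⁻¹' U A m : Set {N : ThickSubmodule A // c N = N})) ∧
    (∀ m : M, IsCompact (Subtype.val ⁻¹' U A m : Set {N : ThickSubmodule A // c N = N})) := by
  classical
  have hbasis := isBasis_sub A (fun N => c N = N)
  have hcomp : ∀ m : M,
      IsCompact (Subtype.val ⁻¹' U A m : Set {N : ThickSubmodule A // c N = N}) :=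
    fun m => compact_basic A hext hord m
  have huniv : (Set.univ : Set {N : ThickSubmodule A // c N = N}) =
      Subtype.val ⁻¹' U A 0 := by
    rw [U_zero A]; simp
  have hCS : CompactSpace {N : ThickSubmodule A // c N = N} :=
    ⟨by rw [huniv]; exact hcomp 0⟩
  have hT0 : T0Space {N : ThickSubmodule A // c N = N} := by
    refine ⟨fun x y h => ?_⟩
    have h1 := (mem_closure_singleton_iff A _ x y).mp h.specializes.mem_closure
    have h2 := (mem_closure_singleton_iff A _ y x).mp h.specializes'.mem_closure
    exact Subtype.ext (ThickSubmodule.ext' A (Set.Subset.antisymm h2 h1))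
  have hQS : QuasiSober {N : ThickSubmodule A // c N = N} := by
    refine ⟨fun {S} hirr hclosed => ?_⟩
    obtain ⟨x₀, hx₀⟩ := hirr.1
    have hcomb : ∀ m₁ m₂ : M, (∃ x ∈ S, m₁ ∈ x.val.carrier) →
        (∃ x ∈ S, m₂ ∈ x.val.carrier) →
        ∃ x ∈ S, m₁ ∈ x.val.carrier ∧ m₂ ∈ x.val.carrier := by
      rintro m₁ m₂ ⟨x₁, hx₁, hm₁⟩ ⟨x₂, hx₂, hm₂⟩
      obtain ⟨x, hxS, hx1, hx2⟩ := hirr.2 _ _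
        ((isOpen_U A m₁).preimage continuous_subtype_val)
        ((isOpen_U A m₂).preimage continuous_subtype_val)
        ⟨x₁, hx₁, hm₁⟩ ⟨x₂, hx₂, hm₂⟩
      exact ⟨x, hxS, hx1, hx2⟩
    set T : ThickSubmodule A :=
      { carrier := {m : M | ∃ x ∈ S, m ∈ x.val.carrier}
        zero_mem := ⟨x₀, hx₀, x₀.val.zero_mem⟩
        act_mem := by
          rintro a m ⟨x, hx, hm⟩
          exact ⟨x, hx, x.val.act_mem a m hm⟩
        biprod_mem_iff := by
          intro m m'
          constructor
          · rintro ⟨x, hx, hmm⟩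
            obtain ⟨h1, h2⟩ := (x.val.biprod_mem_iff m m').1 hmm
            exact ⟨⟨x, hx, h1⟩, ⟨x, hx, h2⟩⟩
          · rintro ⟨h1, h2⟩
            obtain ⟨x, hx, hm1, hm2⟩ := hcomb m m' h1 h2
            exact ⟨x, hx, (x.val.biprod_mem_iff m m').2 ⟨hm1, hm2⟩⟩
        mem₃_of_dist := by
          intro Tr hTr h1 h2
          obtain ⟨x, hx, ha, hb⟩ := hcomb _ _ h1 h2
          exact ⟨x, hx, x.val.mem₃_of_dist Tr hTr ha hb⟩
        mem₁_of_dist := by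
          intro Tr hTr h1 h2
          obtain ⟨x, hx, ha, hb⟩ := hcomb _ _ h1 h2
          exact ⟨x, hx, x.val.mem₁_of_dist Tr hTr ha hb⟩
        mem₂_of_dist := by
          intro Tr hTr h1 h2
          obtain ⟨x, hx, ha, hb⟩ := hcomb _ _ h1 h2
          exact ⟨x, hx, x.val.mem₂_of_dist Tr hTr ha hb⟩ } with hTdef
    have hTfix : c T = T := by
      apply ThickSubmodule.ext'
      apply Set.Subset.antisymm
      · intro m hm
        rw [hft T] at hm
        obtain ⟨n, hn, hmn⟩ := Set.mem_iUnion₂.mp hm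
        obtain ⟨x, hx, hnx⟩ := hn
        have hsub : (genSub A {n}).carrier ⊆ x.val.carrier := by
          intro z hz
          simp only [genSub, Set.mem_iInter] at hz
          exact hz x.val (Set.singleton_subset_iff.2 hnx)
        have hmemx := hord _ _ hsub hmn
        rw [x.prop] at hmemx
        exact ⟨x, hx, hmemx⟩
      · exact hext T
    refine ⟨⟨T, hTfix⟩, ?_⟩
    show closure _ = S
    apply Set.Subset.antisymm
    · intro y hy
      rw [mem_closure_singleton_iff] at hy
      by_contra hyS
      obtain ⟨b, ⟨m, rfl⟩, hm, hbs⟩ :=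
        hbasis.exists_subset_of_mem_open (show y ∈ Sᶜ from hyS) hclosed.isOpen_compl
      obtain ⟨x, hxS, hmx⟩ := hy hm
      exact (hbs hmx) hxS
    · intro y hyS
      rw [mem_closure_singleton_iff]
      exact fun m hm => ⟨y, hyS, hm⟩
  have hbasis2 : TopologicalSpace.IsTopologicalBasis
      {s : Set {N : ThickSubmodule A // c N = N} | IsOpen s ∧ IsCompact s} := by
    apply TopologicalSpace.isTopologicalBasis_of_isOpen_of_nhds (fun u hu => hu.1)
    intro x u hxu hu
    obtain ⟨b, ⟨m, rfl⟩, hm, hbs⟩ := hbasis.exists_subset_of_mem_open hxu hu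
    exact ⟨_, ⟨(isOpen_U A m).preimage continuous_subtype_val, hcomp m⟩, hm, hbs⟩
  have hinter : ∀ s t : Set {N : ThickSubmodule A // c N = N},
      IsOpen s → IsCompact s → IsOpen t → IsCompact t → IsCompact (s ∩ t) := by
    intro s t hso hsc hto htc
    obtain ⟨ι₁, t₁, f₁, hs⟩ := open_compact_eq_finite_union A hso hsc
    obtain ⟨ι₂, t₂, f₂, ht⟩ := open_compact_eq_finite_union A hto htc
    have key : s ∩ t =
        ⋃ i ∈ t₁, ⋃ j ∈ t₂, Subtype.val ⁻¹' U A (f₁ i ⊞ f₂ j) := by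
      rw [hs, ht]
      ext z
      simp only [Set.mem_inter_iff, Set.mem_iUnion, Set.mem_preimage, exists_prop]
      constructor
      · rintro ⟨⟨i, hi, hzi⟩, ⟨j, hj, hzj⟩⟩
        exact ⟨i, hi, j, hj, (z.val.biprod_mem_iff _ _).2 ⟨hzi, hzj⟩⟩
      · rintro ⟨i, hi, j, hj, hz⟩
        obtain ⟨h1, h2⟩ := (z.val.biprod_mem_iff _ _).1 hz
        exact ⟨⟨i, hi, h1⟩, ⟨j, hj, h2⟩⟩
    rw [key]
    exact t₁.finite_toSet.isCompact_biUnion fun i _ =>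
      t₂.finite_toSet.isCompact_biUnion fun j _ => hcomp _
  exact ⟨⟨hCS, hT0, hQS, hbasis2, hinter⟩, hbasis, hcomp⟩
end

section
/- Let M be a triangulated category that is a module over a tensor triangulated category (K,⊗,1), let c : SMod(M) → SMod(M) be an operator that is extensive, order-preserving and of finite type, and let 𝔘 be an ultrafilter on the set SMod^c(M). Then L_𝔘 := {m ∈ M : U(m) ∩ SMod^c(M) ∈ 𝔘} is a thick K-submodule of M. -/
open CategoryTheory CategoryTheory.Limits CategoryTheory.Pretriangulated
open CategoryTheory.MonoidalCategory ZeroObject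

universe v u v' u'

variable {K : Type u} [Category.{v} K] [MonoidalCategory K] [HasZeroObject K] [Preadditive K]
  [HasShift K ℤ] [∀ n : ℤ, (shiftFunctor K n).Additive] [Pretriangulated K]
variable {M : Type u'} [Category.{v'} M] [HasZeroObject M] [Preadditive M] [HasShift M ℤ]
  [∀ n : ℤ, (shiftFunctor M n).Additive] [Pretriangulated M] [HasBinaryBiproducts M]

variable (A : TTModuleStr K M)

/-- Given an ultrafilter `𝔘` on `SMod^c(M)`, the collection
`L_𝔘 = { m ∈ M | U(m) ∩ SMod^c(M) ∈ 𝔘 }` is a thick `K`-submodule of `M`. -/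
theorem statement4 (c : ThickSubmodule A → ThickSubmodule A)
    (hext : Extensive A c) (hord : OrderPreserving A c) (hft : FiniteType A c)
    (𝔘 : Ultrafilter {N : ThickSubmodule A // c N = N}) :
    ∃ L : ThickSubmodule A,
      L.carrier = {m : M | {N : {N : ThickSubmodule A // c N = N} | N.1 ∈ U A m} ∈ 𝔘} := by
  refine ⟨⟨{m : M | {N : {N : ThickSubmodule A // c N = N} | N.1 ∈ U A m} ∈ 𝔘}, ?_, ?_, ?_, ?_, ?_, ?_⟩, rfl⟩
  · exact Filter.univ_mem' (fun N => N.1.zero_mem)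
  · intro a m hm
    exact Filter.mem_of_superset hm (fun N hN => N.1.act_mem a m hN)
  · intro m m'
    constructor
    · intro h
      exact ⟨Filter.mem_of_superset h (fun N hN => ((N.1.biprod_mem_iff m m').1 hN).1),
        Filter.mem_of_superset h (fun N hN => ((N.1.biprod_mem_iff m m').1 hN).2)⟩
    · rintro ⟨h1, h2⟩
      filter_upwards [h1, h2] with N hN1 hN2
      exact (N.1.biprod_mem_iff m m').2 ⟨hN1, hN2⟩
  · intro T hT h1 h2
    filter_upwards [h1, h2] with N hN1 hN2
    exact N.1.mem₃_of_dist T hT hN1 hN2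
  · intro T hT h1 h2
    filter_upwards [h1, h2] with N hN1 hN2
    exact N.1.mem₁_of_dist T hT hN1 hN2
  · intro T hT h1 h2
    filter_upwards [h1, h2] with N hN1 hN2
    exact N.1.mem₂_of_dist T hT hN1 hN2
end

section
/- Let M be a triangulated category that is a module over a tensor triangulated category (K,⊗,1), let c : SMod(M) → SMod(M) be an operator that is extensive, order-preserving and of finite type, and let 𝔘 be an ultrafilter on the set SMod^c(M). Then the thick K-submodule L_𝔘 := {m ∈ M : U(m) ∩ SMod^c(M) ∈ 𝔘} is a fixed point of c, i.e. c(L_𝔘) = L_𝔘, so L_𝔘 ∈ SMod^c(M). -/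
open CategoryTheory CategoryTheory.Limits CategoryTheory.Pretriangulated
open CategoryTheory.MonoidalCategory ZeroObject

universe v u v' u'

variable {K : Type u} [Category.{v} K] [MonoidalCategory K] [HasZeroObject K] [Preadditive K]
  [HasShift K ℤ] [∀ n : ℤ, (shiftFunctor K n).Additive] [Pretriangulated K]
variable {M : Type u'} [Category.{v'} M] [HasZeroObject M] [Preadditive M] [HasShift M ℤ]
  [∀ n : ℤ, (shiftFunctor M n).Additive] [Pretriangulated M] [HasBinaryBiproducts M]

variable (A : TTModuleStr K M)

/-- Given an ultrafilter `𝔘` on `SMod^c(M)`, the thick `K`-submodule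
`L_𝔘 = { m ∈ M | U(m) ∩ SMod^c(M) ∈ 𝔘 }` is a fixed point of `c`. -/
theorem statement5 (c : ThickSubmodule A → ThickSubmodule A)
    (hext : Extensive A c) (hord : OrderPreserving A c) (hft : FiniteType A c)
    (𝔘 : Ultrafilter {N : ThickSubmodule A // c N = N}) :
    ∀ L : ThickSubmodule A,
      L.carrier = {m : M | {N : {N : ThickSubmodule A // c N = N} | N.1 ∈ U A m} ∈ 𝔘} →
      c L = L := by
  intro L hL
  have hsub : (c L).carrier ⊆ L.carrier := by
    intro m hm
    rw [hft L] at hm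
    simp only [Set.mem_iUnion] at hm
    obtain ⟨n, hn, hmn⟩ := hm
    rw [hL] at hn ⊢
    refine 𝔘.1.sets_of_superset hn ?_
    intro N hN
    have h1 : ({n} : Set M) ⊆ N.1.carrier := by
      intro x hx; rw [Set.mem_singleton_iff] at hx; subst hx; exact hN
    have h2 : (genSub A {n}).carrier ⊆ N.1.carrier := by
      intro x hx
      simp only [genSub, Set.mem_iInter] at hx
      exact hx N.1 h1
    have h3 := hord _ _ h2
    have h4 : (c N.1).carrier = N.1.carrier := by rw [N.2]
    show m ∈ N.1.carrier
    rw [← h4]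
    exact h3 hmn
  apply SetLike.coe_injective
  exact Set.Subset.antisymm hsub (hext L)
end

section
/- Let M be a triangulated category that is a module over a tensor triangulated category (K,⊗,1), let c : SMod(M) → SMod(M) be an operator that is extensive, order-preserving and of finite type, let 𝔘 be an ultrafilter on the set SMod^c(M), and let L_𝔘 := {m ∈ M : U(m) ∩ SMod^c(M) ∈ 𝔘}. Then for every object m of M, L_𝔘 ∈ U(m) ∩ SMod^c(M) if and only if U(m) ∩ SMod^c(M) ∈ 𝔘. -/
open CategoryTheory CategoryTheory.Limits CategoryTheory.Pretriangulated
open CategoryTheory.MonoidalCategory ZeroObject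

universe v u v' u'

variable {K : Type u} [Category.{v} K] [MonoidalCategory K] [HasZeroObject K] [Preadditive K]
  [HasShift K ℤ] [∀ n : ℤ, (shiftFunctor K n).Additive] [Pretriangulated K]
variable {M : Type u'} [Category.{v'} M] [HasZeroObject M] [Preadditive M] [HasShift M ℤ]
  [∀ n : ℤ, (shiftFunctor M n).Additive] [Pretriangulated M] [HasBinaryBiproducts M]

variable (A : TTModuleStr K M)

/-- For every object `m` of `M`, `L_𝔘 ∈ U(m) ∩ SMod^c(M)` if and only if
`U(m) ∩ SMod^c(M) ∈ 𝔘`. -/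
theorem statement6 (c : ThickSubmodule A → ThickSubmodule A)
    (hext : Extensive A c) (hord : OrderPreserving A c) (hft : FiniteType A c)
    (𝔘 : Ultrafilter {N : ThickSubmodule A // c N = N}) :
    ∀ L : ThickSubmodule A,
      L.carrier = {m : M | {N : {N : ThickSubmodule A // c N = N} | N.1 ∈ U A m} ∈ 𝔘} →
      ∀ m : M, (L ∈ U A m ∧ c L = L) ↔
        {N : {N : ThickSubmodule A // c N = N} | N.1 ∈ U A m} ∈ 𝔘 := by
  intro L hL m
  have hcL : c L = L := by
    have hsub : (c L).carrier ⊆ L.carrier := by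
      rw [hft L]
      rintro x hx
      simp only [Set.mem_iUnion] at hx
      obtain ⟨n, hn, hxn⟩ := hx
      rw [hL] at hn
      rw [hL]
      apply Filter.mem_of_superset hn
      rintro ⟨N, hNc⟩ hnN
      have h1 : (genSub A {n}).carrier ⊆ N.carrier := by
        intro y hy
        simp only [genSub, Set.mem_iInter] at hy
        exact hy N (by simpa [U] using hnN)
      have h2 := hord _ _ h1
      rw [hNc] at h2
      exact h2 hxn
    exact SetLike.ext' (Set.Subset.antisymm hsub (hext L))
  constructor
  · rintro ⟨hm, _⟩
    rw [U, Set.mem_setOf_eq, hL] at hm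
    exact hm
  · intro h
    refine ⟨?_, hcL⟩
    rw [U, Set.mem_setOf_eq, hL]
    exact h
end

section
/- Let M be a triangulated category that is a module over a tensor triangulated category (K,⊗,1), and let 𝔉 be a family of thick K-submodules of M containing M, closed under nonempty intersections and closed under filtered directed unions. Then 𝔉, equipped with the subspace topology from SMod(M), is a spectral space having {U(m) ∩ 𝔉}_{m ∈ M} as a basis of quasi-compact open sets. -/
open CategoryTheory CategoryTheory.Limits CategoryTheory.Pretriangulated
open CategoryTheory.MonoidalCategory ZeroObject

universe v u v' u'

variable {K : Type u} [Category.{v} K] [MonoidalCategory K] [HasZeroObject K] [Preadditive K]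
  [HasShift K ℤ] [∀ n : ℤ, (shiftFunctor K n).Additive] [Pretriangulated K]
variable {M : Type u'} [Category.{v'} M] [HasZeroObject M] [Preadditive M] [HasShift M ℤ]
  [∀ n : ℤ, (shiftFunctor M n).Additive] [Pretriangulated M] [HasBinaryBiproducts M]

variable (A : TTModuleStr K M)

/-- Every open set of `SMod(M)` is upward closed with respect to inclusion of carriers. -/
theorem thick_open_up {t : Set (ThickSubmodule A)}
    (h : TopologicalSpace.GenerateOpen (Set.range (U A)) t) :
    ∀ N N' : ThickSubmodule A, N.carrier ⊆ N'.carrier → N ∈ t → N' ∈ t := by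
  induction h with
  | basic s hs =>
      obtain ⟨m, rfl⟩ := hs
      intro N N' hsub hN
      exact hsub hN
  | univ => intro N N' _ _; trivial
  | inter s₁ s₂ h₁ h₂ ih₁ ih₂ =>
      intro N N' hsub hN
      exact ⟨ih₁ N N' hsub hN.1, ih₂ N N' hsub hN.2⟩
  | sUnion S hS ih =>
      rintro N N' hsub ⟨s, hs, hN⟩
      exact ⟨s, hs, ih s hs N N' hsub hN⟩

/-- Every open set of `SMod(M)` is inaccessible by directed unions. -/
theorem thick_open_inacc {t : Set (ThickSubmodule A)}
    (h : TopologicalSpace.GenerateOpen (Set.range (U A)) t) :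
    ∀ G : Set (ThickSubmodule A), G.Nonempty →
      (∀ N₁ ∈ G, ∀ N₂ ∈ G, ∃ N₃ ∈ G, N₁.carrier ⊆ N₃.carrier ∧ N₂.carrier ⊆ N₃.carrier) →
      ∀ F : ThickSubmodule A, F.carrier = ⋃ N ∈ G, N.carrier → F ∈ t →
        ∃ N ∈ G, N ∈ t := by
  induction h with
  | basic s hs =>
      obtain ⟨m, rfl⟩ := hs
      intro G hne hdir F hF hFt
      have hm : m ∈ ⋃ N ∈ G, N.carrier := by rw [← hF]; exact hFt
      obtain ⟨N, hNG, hN⟩ := Set.mem_iUnion₂.1 hm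
      exact ⟨N, hNG, hN⟩
  | univ =>
      rintro G ⟨N, hN⟩ _ _ _ _
      exact ⟨N, hN, trivial⟩
  | inter s₁ s₂ h₁ h₂ ih₁ ih₂ =>
      intro G hne hdir F hF hFt
      obtain ⟨N₁, hN₁G, hN₁⟩ := ih₁ G hne hdir F hF hFt.1
      obtain ⟨N₂, hN₂G, hN₂⟩ := ih₂ G hne hdir F hF hFt.2
      obtain ⟨N₃, hN₃G, h13, h23⟩ := hdir N₁ hN₁G N₂ hN₂G
      exact ⟨N₃, hN₃G, thick_open_up A h₁ N₁ N₃ h13 hN₁,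
        thick_open_up A h₂ N₂ N₃ h23 hN₂⟩
  | sUnion S hS ih =>
      rintro G hne hdir F hF ⟨s, hs, hFs⟩
      obtain ⟨N, hNG, hN⟩ := ih s hs G hne hdir F hF hFs
      exact ⟨N, hNG, s, hs, hN⟩

theorem thick_isOpen_iff {t : Set (ThickSubmodule A)} :
    IsOpen t ↔ TopologicalSpace.GenerateOpen (Set.range (U A)) t := Iff.rfl

/-- A family `𝔉` of thick `K`-submodules of `M` containing `M`, closed under nonempty
intersections and under filtered directed unions, is a spectral space (with the subspace
topology from `SMod(M)`) having `{U(m) ∩ 𝔉}` as a basis of quasi-compact open sets. -/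
theorem statement10 (𝔉 : Set (ThickSubmodule A)) (hM : topSub A ∈ 𝔉)
    (hint : ∀ G : Set (ThickSubmodule A), G ⊆ 𝔉 → G.Nonempty →
      ∃ F ∈ 𝔉, F.carrier = ⋂ N ∈ G, ThickSubmodule.carrier N)
    (hunion : ∀ G : Set (ThickSubmodule A), G ⊆ 𝔉 → G.Nonempty →
      (∀ N₁ ∈ G, ∀ N₂ ∈ G, ∃ N₃ ∈ G,
        ThickSubmodule.carrier N₁ ⊆ ThickSubmodule.carrier N₃ ∧
        ThickSubmodule.carrier N₂ ⊆ ThickSubmodule.carrier N₃) →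
      ∃ F ∈ 𝔉, F.carrier = ⋃ N ∈ G, ThickSubmodule.carrier N) :
    (IsSpectralSpace {N : ThickSubmodule A // N ∈ 𝔉} ∧
      TopologicalSpace.IsTopologicalBasis
        (Set.range fun m : M =>
          (Subtype.val ⁻¹' U A m : Set {N : ThickSubmodule A // N ∈ 𝔉})) ∧
      (∀ m : M, IsCompact (Subtype.val ⁻¹' U A m : Set {N : ThickSubmodule A // N ∈ 𝔉}))) := by
  classical
  set X := {N : ThickSubmodule A // N ∈ 𝔉} with hX
  set B : M → Set X := fun m => (Subtype.val ⁻¹' U A m : Set X) with hB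
  -- the subspace topology is generated by the `B m`
  have hgen : (instTopologicalSpaceSubtype : TopologicalSpace X) =
      TopologicalSpace.generateFrom (Set.range B) := by
    show TopologicalSpace.induced _ (TopologicalSpace.generateFrom (Set.range (U A))) = _
    rw [induced_generateFrom_eq]
    congr 1
    rw [← Set.range_comp]
    rfl
  -- basic intersections
  have hBinter : ∀ m m' : M, B m ∩ B m' = B (m ⊞ m') := by
    intro m m'
    ext x
    have := x.1.biprod_mem_iff m m'
    simp only [hB, Set.mem_inter_iff, Set.mem_preimage]
    exact ⟨fun h => this.2 h, fun h => this.1 h⟩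
  -- the `B m` form a topological basis
  have hbasis : TopologicalSpace.IsTopologicalBasis (Set.range B) := by
    refine ⟨?_, ?_, hgen⟩
    · rintro t₁ ⟨m₁, rfl⟩ t₂ ⟨m₂, rfl⟩ x hx
      refine ⟨B (m₁ ⊞ m₂), ⟨m₁ ⊞ m₂, rfl⟩, ?_, ?_⟩
      · rw [← hBinter]; exact hx
      · rw [← hBinter]
    · apply Set.eq_univ_of_forall
      intro x
      exact ⟨B 0, ⟨0, rfl⟩, x.1.zero_mem⟩
  have hBopen : ∀ m : M, IsOpen (B m) := fun m => hbasis.isOpen ⟨m, rfl⟩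
  -- opens of X are upward closed
  have hopen_up : ∀ (O : Set X), IsOpen O → ∀ x y : X,
      x.1.carrier ⊆ y.1.carrier → x ∈ O → y ∈ O := by
    intro O hO x y hsub hx
    rw [isOpen_induced_iff] at hO
    obtain ⟨t, ht, rfl⟩ := hO
    exact thick_open_up A ((thick_isOpen_iff A).1 ht) x.1 y.1 hsub hx
  -- opens of X are inaccessible by directed unions
  have hinacc : ∀ (O : Set X), IsOpen O → ∀ G : ThickSubmodule A → Prop,
      ∀ (hG𝔉 : ∀ N, G N → N ∈ 𝔉),
      (∃ N, G N) →
      (∀ N₁, G N₁ → ∀ N₂, G N₂ → ∃ N₃, G N₃ ∧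
        N₁.carrier ⊆ N₃.carrier ∧ N₂.carrier ⊆ N₃.carrier) →
      ∀ F : X, F.1.carrier = ⋃ N ∈ {N | G N}, N.carrier → F ∈ O →
        ∃ N, ∃ h : G N, (⟨N, hG𝔉 N h⟩ : X) ∈ O := by
    intro O hO G hG𝔉 hne hdir F hF hFO
    rw [isOpen_induced_iff] at hO
    obtain ⟨t, ht, rfl⟩ := hO
    obtain ⟨N, hNG, hNt⟩ := thick_open_inacc A ((thick_isOpen_iff A).1 ht) {N | G N}
      hne (fun N₁ h₁ N₂ h₂ => hdir N₁ h₁ N₂ h₂) F.1 hF hFO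
    exact ⟨N, hNG, hNt⟩
  -- minimal element of 𝔉 containing a given set
  have hmin : ∀ Y : Set M, ∃ F ∈ 𝔉, Y ⊆ F.carrier ∧
      ∀ F' ∈ 𝔉, Y ⊆ F'.carrier → F.carrier ⊆ F'.carrier := by
    intro Y
    obtain ⟨F, hF𝔉, hFeq⟩ := hint {N | N ∈ 𝔉 ∧ Y ⊆ N.carrier} (fun N h => h.1)
      ⟨topSub A, ⟨hM, Set.subset_univ Y⟩⟩
    refine ⟨F, hF𝔉, ?_, ?_⟩
    · intro m hm
      rw [hFeq]
      exact Set.mem_iInter₂.2 fun N hN => hN.2 hm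
    · intro F' hF' hY
      rw [hFeq]
      exact Set.biInter_subset_of_mem ⟨hF', hY⟩
  -- each B m is compact
  have hBcompact : ∀ m : M, IsCompact (B m) := by
    intro m
    obtain ⟨F, hF𝔉, hsub, hminF⟩ := hmin {m}
    rw [isCompact_iff_finite_subcover]
    intro ι Uo hUo hcover
    have hxF : (⟨F, hF𝔉⟩ : X) ∈ B m := hsub rfl
    obtain ⟨i, hi⟩ := Set.mem_iUnion.1 (hcover hxF)
    refine ⟨{i}, fun y hy => ?_⟩
    have hFy : F.carrier ⊆ y.1.carrier :=
      hminF y.1 y.2 (Set.singleton_subset_iff.2 hy)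
    have : y ∈ Uo i := hopen_up (Uo i) (hUo i) ⟨F, hF𝔉⟩ y hFy hi
    simp only [Set.mem_iUnion]
    exact ⟨i, Finset.mem_singleton_self i, this⟩
  -- compact space
  have hcompX : CompactSpace X := by
    constructor
    have huniv : (Set.univ : Set X) = B 0 :=
      (Set.eq_univ_of_forall fun x => x.1.zero_mem).symm
    rw [huniv]
    exact hBcompact 0
  -- T0
  have hT0 : T0Space X := by
    rw [t0Space_iff_inseparable]
    intro x y h
    apply Subtype.ext
    apply SetLike.coe_injective (A := ThickSubmodule A)
    show x.1.carrier = y.1.carrier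
    ext m
    exact h.mem_open_iff (hBopen m)
  -- sober
  have hsober : QuasiSober X := by
    constructor
    intro S hirr hcl
    -- finite approximation inside S
    have hfin : ∀ T : Finset M, (∀ m ∈ T, ∃ x ∈ S, m ∈ x.1.carrier) →
        ∃ x ∈ S, ∀ m ∈ T, m ∈ x.1.carrier := by
      intro T
      induction T using Finset.induction_on with
      | empty =>
          intro _
          obtain ⟨x, hx⟩ := hirr.1
          exact ⟨x, hx, by simp⟩
      | @insert a T haT ih =>
          intro hall
          obtain ⟨x₁, hx₁S, hx₁⟩ := ih fun m hm => hall m (Finset.mem_insert_of_mem hm)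
          obtain ⟨x₂, hx₂S, hx₂⟩ := hall a (Finset.mem_insert_self a T)
          have hO₁ : IsOpen (⋂ m ∈ T, B m) := isOpen_biInter_finset fun m _ => hBopen m
          obtain ⟨x, hxS, hx⟩ := hirr.2 (⋂ m ∈ T, B m) (B a) hO₁ (hBopen a)
            ⟨x₁, hx₁S, Set.mem_iInter₂.2 fun m hm => hx₁ m hm⟩
            ⟨x₂, hx₂S, hx₂⟩
          refine ⟨x, hxS, fun m hm => ?_⟩
          rcases Finset.mem_insert.1 hm with rfl | hm
          · exact hx.2
          · exact Set.mem_iInter₂.1 hx.1 m hm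
    -- S is downward closed
    have hdown : ∀ x ∈ S, ∀ y : X, y.1.carrier ⊆ x.1.carrier → y ∈ S := by
      intro x hx y hsub
      by_contra hy
      exact hopen_up Sᶜ hcl.isOpen_compl y x hsub hy hx
    set SS : Set M := ⋃ x ∈ S, x.1.carrier with hSS
    -- directed family of minimal submodules of finite subsets of SS
    set G : ThickSubmodule A → Prop := fun N => N ∈ 𝔉 ∧
      (∃ T : Finset M, ↑T ⊆ SS ∧ ↑T ⊆ N.carrier ∧
        ∀ F' ∈ 𝔉, ↑T ⊆ F'.carrier → N.carrier ⊆ F'.carrier) with hG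
    have hG𝔉 : ∀ N, G N → N ∈ 𝔉 := fun N h => h.1
    have hGex : ∀ T : Finset M, ↑T ⊆ SS → ∃ N, G N ∧ ↑T ⊆ N.carrier := by
      intro T hT
      obtain ⟨F, hF𝔉, hsub, hminF⟩ := hmin ↑T
      exact ⟨F, ⟨hF𝔉, T, hT, hsub, hminF⟩, hsub⟩
    have hGne : ∃ N, G N := by
      obtain ⟨N, hN, _⟩ := hGex ∅ (by simp)
      exact ⟨N, hN⟩
    have hGS : ∀ N, G N → ∃ x ∈ S, N.carrier ⊆ x.1.carrier := by
      rintro N ⟨hN𝔉, T, hTSS, hTN, hminN⟩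
      obtain ⟨x, hxS, hx⟩ := hfin T (fun m hm => by
        obtain ⟨x, hxS, hm'⟩ := Set.mem_iUnion₂.1 (hTSS hm)
        exact ⟨x, hxS, hm'⟩)
      exact ⟨x, hxS, hminN x.1 x.2 (fun m hm => hx m hm)⟩
    have hGdir : ∀ N₁, G N₁ → ∀ N₂, G N₂ → ∃ N₃, G N₃ ∧
        N₁.carrier ⊆ N₃.carrier ∧ N₂.carrier ⊆ N₃.carrier := by
      rintro N₁ ⟨h₁𝔉, T₁, hT₁SS, hT₁, hmin₁⟩ N₂ ⟨h₂𝔉, T₂, hT₂SS, hT₂, hmin₂⟩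
      obtain ⟨N₃, hN₃, hTN₃⟩ := hGex (T₁ ∪ T₂) (by
        rw [Finset.coe_union]
        exact Set.union_subset hT₁SS hT₂SS)
      refine ⟨N₃, hN₃, ?_, ?_⟩
      · exact hmin₁ N₃ hN₃.1 (fun m hm => hTN₃ (by
          rw [Finset.coe_union]; exact Set.mem_union_left _ hm))
      · exact hmin₂ N₃ hN₃.1 (fun m hm => hTN₃ (by
          rw [Finset.coe_union]; exact Set.mem_union_right _ hm))
    have hGU : (⋃ N ∈ {N | G N}, N.carrier) = SS := by
      apply subset_antisymm
      · intro m hm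
        obtain ⟨N, hNG, hmN⟩ := Set.mem_iUnion₂.1 hm
        obtain ⟨x, hxS, hsub⟩ := hGS N hNG
        exact Set.mem_iUnion₂.2 ⟨x, hxS, hsub hmN⟩
      · intro m hm
        obtain ⟨N, hNG, hmN⟩ := hGex {m} (by simpa using hm)
        exact Set.mem_iUnion₂.2 ⟨N, hNG, hmN (by simp)⟩
    obtain ⟨Fs, hFs𝔉, hFseq⟩ := hunion {N | G N} (fun N h => hG𝔉 N h) hGne
      (fun N₁ h₁ N₂ h₂ => hGdir N₁ h₁ N₂ h₂)
    have hFsSS : Fs.carrier = SS := by rw [hFseq, hGU]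
    set xs : X := ⟨Fs, hFs𝔉⟩ with hxs
    have hxsS : xs ∈ S := by
      by_contra hxsn
      obtain ⟨N, hNG, hN⟩ := hinacc Sᶜ hcl.isOpen_compl G hG𝔉 hGne hGdir xs
        (by rw [hFseq]) hxsn
      obtain ⟨x, hxS, hsub⟩ := hGS N hNG
      exact hN (hdown x hxS ⟨N, hG𝔉 N hNG⟩ hsub)
    refine ⟨xs, ?_⟩
    apply subset_antisymm
    · exact closure_minimal (Set.singleton_subset_iff.2 hxsS) hcl
    · intro y hy
      rw [mem_closure_iff]
      intro O hO hyO
      refine ⟨xs, ?_, rfl⟩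
      have hysub : y.1.carrier ⊆ Fs.carrier := by
        rw [hFsSS]
        exact fun m hm => Set.mem_iUnion₂.2 ⟨y, hy, hm⟩
      exact hopen_up O hO y xs hysub hyO
  -- every compact open is a finite union of basic opens
  have hsplit : ∀ s : Set X, IsOpen s → IsCompact s →
      ∃ T : Finset M, s = ⋃ m ∈ T, B m := by
    intro s hso hsc
    have hcover : s ⊆ ⋃ i : {m : M // B m ⊆ s}, B i.1 := by
      intro x hx
      obtain ⟨v, ⟨m, rfl⟩, hxv, hvs⟩ := hbasis.exists_subset_of_mem_open hx hso
      exact Set.mem_iUnion.2 ⟨⟨m, hvs⟩, hxv⟩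
    obtain ⟨t, ht⟩ := hsc.elim_finite_subcover (fun i : {m : M // B m ⊆ s} => B i.1)
      (fun i => hBopen i.1) hcover
    refine ⟨t.image Subtype.val, subset_antisymm ?_ ?_⟩
    · intro x hx
      obtain ⟨i, hit, hxi⟩ := Set.mem_iUnion₂.1 (ht hx)
      exact Set.mem_iUnion₂.2 ⟨i.1, Finset.mem_image_of_mem _ hit, hxi⟩
    · intro x hx
      obtain ⟨m, hmT, hxm⟩ := Set.mem_iUnion₂.1 hx
      obtain ⟨i, _, rfl⟩ := Finset.mem_image.1 hmT
      exact i.2 hxm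
  refine ⟨⟨hcompX, hT0, hsober, ?_, ?_⟩, hbasis, hBcompact⟩
  · -- compact opens form a basis
    apply TopologicalSpace.isTopologicalBasis_of_isOpen_of_nhds
    · exact fun s hs => hs.1
    · intro x u hxu huo
      obtain ⟨v, ⟨m, rfl⟩, hxv, hvu⟩ := hbasis.exists_subset_of_mem_open hxu huo
      exact ⟨B m, ⟨hBopen m, hBcompact m⟩, hxv, hvu⟩
  · -- intersection of compact opens is compact
    intro s t hso hsc hto htc
    obtain ⟨T₁, rfl⟩ := hsplit s hso hsc
    obtain ⟨T₂, rfl⟩ := hsplit t hto htc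
    have : (⋃ m ∈ T₁, B m) ∩ (⋃ m ∈ T₂, B m) =
        ⋃ m ∈ T₁, ⋃ m' ∈ T₂, B (m ⊞ m') := by
      ext x
      simp only [Set.mem_inter_iff, Set.mem_iUnion, ← hBinter, Set.mem_inter_iff]
      tauto
    rw [this]
    exact T₁.isCompact_biUnion fun m _ =>
      T₂.isCompact_biUnion fun m' _ => hBcompact (m ⊞ m')
end

section
/- Let M be a triangulated category that is a module over a tensor triangulated category (K,⊗,1), and let c : SMod(M) → SMod(M) be an operator that is extensive, order-preserving and of finite type. Then the operator c^∞, defined by c^∞(N) := ∪_{i ≥ 0} c^i(N), is of finite type: for every N ∈ SMod(M), c^∞(N) = ∪_{n ∈ N} c^∞(K(n)). -/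
open CategoryTheory CategoryTheory.Limits CategoryTheory.Pretriangulated
open CategoryTheory.MonoidalCategory ZeroObject

universe v u v' u'

variable {K : Type u} [Category.{v} K] [MonoidalCategory K] [HasZeroObject K] [Preadditive K]
  [HasShift K ℤ] [∀ n : ℤ, (shiftFunctor K n).Additive] [Pretriangulated K]
variable {M : Type u'} [Category.{v'} M] [HasZeroObject M] [Preadditive M] [HasShift M ℤ]
  [∀ n : ℤ, (shiftFunctor M n).Additive] [Pretriangulated M] [HasBinaryBiproducts M]

variable (A : TTModuleStr K M)

lemma mem_genSub_self (m : M) : m ∈ (genSub A {m}).carrier := by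
  simp only [genSub, Set.mem_iInter]
  intro N hN
  exact hN rfl

lemma genSub_subset {X : Set M} {N : ThickSubmodule A} (h : X ⊆ N.carrier) :
    (genSub A X).carrier ⊆ N.carrier := by
  intro x hx
  simp only [genSub, Set.mem_iInter] at hx
  exact hx N h

lemma iterate_mono {c : ThickSubmodule A → ThickSubmodule A} (hord : OrderPreserving A c)
    (i : ℕ) {N N' : ThickSubmodule A} (h : N.carrier ⊆ N'.carrier) :
    (c^[i] N).carrier ⊆ (c^[i] N').carrier := by
  induction i generalizing N N' with
  | zero => exact h
  | succ i ih =>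
    rw [Function.iterate_succ_apply', Function.iterate_succ_apply']
    exact hord _ _ (ih h)

/-- Lemma 3.3(b): the operator `c^∞` is of finite type, i.e.
`c^∞(N) = ⋃_{n ∈ N} c^∞(K(n))` for every `N ∈ SMod(M)`. -/
theorem statement16 (c : ThickSubmodule A → ThickSubmodule A)
    (hext : Extensive A c) (hord : OrderPreserving A c) (hft : FiniteType A c)
    (N : ThickSubmodule A) :
    (⋃ i : ℕ, (c^[i] N).carrier) =
      ⋃ n ∈ N.carrier, ⋃ i : ℕ, (c^[i] (genSub A {n})).carrier := by
  have key : ∀ i : ℕ, (c^[i] N).carrier ⊆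
      ⋃ n ∈ N.carrier, (c^[i] (genSub A {n})).carrier := by
    intro i
    induction i with
    | zero =>
      intro m hm
      exact Set.mem_biUnion hm (mem_genSub_self A m)
    | succ i ih =>
      intro m hm
      rw [Function.iterate_succ_apply'] at hm
      rw [hft (c^[i] N)] at hm
      obtain ⟨p, hp, hmp⟩ := Set.mem_iUnion₂.1 hm
      obtain ⟨n, hn, hpn⟩ := Set.mem_iUnion₂.1 (ih hp)
      have h1 : (genSub A {p}).carrier ⊆ (c^[i] (genSub A {n})).carrier :=
        genSub_subset A (by simpa using hpn)
      refine Set.mem_biUnion hn ?_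
      rw [Function.iterate_succ_apply']
      exact hord _ _ h1 hmp
  apply Set.Subset.antisymm
  · intro m hm
    obtain ⟨i, hi⟩ := Set.mem_iUnion.1 hm
    obtain ⟨n, hn, h⟩ := Set.mem_iUnion₂.1 (key i hi)
    exact Set.mem_biUnion hn (Set.mem_iUnion.2 ⟨i, h⟩)
  · intro m hm
    obtain ⟨n, hn, h⟩ := Set.mem_iUnion₂.1 hm
    obtain ⟨i, hi⟩ := Set.mem_iUnion.1 h
    exact Set.mem_iUnion.2 ⟨i, iterate_mono A hord i (genSub_subset A (by simpa using hn)) hi⟩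
end
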